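/- arXiv:2106.10008 — 2 statements merged into one kernel-verified Lean document; each statement's English description precedes it below -/
import Mathlib

section
/- Assume W is nonzero. If c < a+b, then c is even; and if c > a+b, then a+b is even. -/
open Polynomial

/-- `alpha l S` is the coefficient of `x^(deg S - l)` in `S`. -/
noncomputable def alpha (l : ℕ) (S : Polynomial (ZMod 2)) : ZMod 2 :=
  S.coeff (S.natDegree - l)

/-- `sigmaPow P n = 1 + P + ⋯ + P^n`, the sum of divisors of `P^n` for `P` irreducible. -/
noncomputable def sigmaPow (P : Polynomial (ZMod 2)) (n : ℕ) : Polynomial (ZMod 2) :=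
  ∑ i ∈ Finset.range (n + 1), P ^ i


lemma evenChoose {n k : ℕ} (hn : Even n) (hk : Odd k) : (n.choose k : ZMod 2) = 0 := by
  rw [ZMod.natCast_eq_zero_iff]
  rcases lt_or_ge n k with hlt | hge
  · simp [Nat.choose_eq_zero_of_lt hlt]
  · have hk1 : 1 ≤ k := hk.pos
    obtain ⟨k', rfl⟩ : ∃ k', k = k' + 1 := ⟨k - 1, by omega⟩
    obtain ⟨n', rfl⟩ : ∃ n', n = n' + 1 := ⟨n - 1, by omega⟩
    have key := Nat.add_one_mul_choose_eq n' k'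
    have h2 : 2 ∣ (n' + 1) * Nat.choose n' k' := Dvd.dvd.mul_right hn.two_dvd _
    rw [key] at h2
    have hnd : ¬ (2 ∣ k' + 1) := by
      rw [Nat.two_dvd_ne_zero, Nat.odd_iff.mp hk]
    exact (Nat.Prime.coprime_iff_not_dvd Nat.prime_two).mpr hnd |>.dvd_of_dvd_mul_right h2

lemma shiftCoeff (p q l : ℕ) (hl : l ≤ p + q) :
    (X ^ p * (X + 1) ^ q : Polynomial (ZMod 2)).coeff (p + q - l) = (q.choose l : ZMod 2) := by
  rcases le_or_gt l q with hlq | hlq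
  · have : p + q - l = (q - l) + p := by omega
    rw [this, coeff_X_pow_mul, coeff_X_add_one_pow, Nat.choose_symm hlq]
  · rw [coeff_X_pow_mul', if_neg (by omega), Nat.choose_eq_zero_of_lt hlq, Nat.cast_zero]

lemma monicShift (p q : ℕ) : (X ^ p * (X + 1) ^ q : Polynomial (ZMod 2)).Monic := by
  rw [← C_1]
  exact (monic_X_pow p).mul ((monic_X_add_C (1 : ZMod 2)).pow q)

lemma natDegShift (p q : ℕ) : (X ^ p * (X + 1) ^ q : Polynomial (ZMod 2)).natDegree = p + q := by
  rw [← C_1, (monic_X_pow p).natDegree_mul ((monic_X_add_C (1 : ZMod 2)).pow q),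
    natDegree_X_pow, (monic_X_add_C (1 : ZMod 2)).natDegree_pow, natDegree_X_add_C, mul_one]

lemma degShift (p q : ℕ) : (X ^ p * (X + 1) ^ q : Polynomial (ZMod 2)).degree = (p + q : ℕ) := by
  rw [degree_eq_natDegree (monicShift p q).ne_zero, natDegShift]

lemma degOneLt (p q : ℕ) (hpq : 1 ≤ p + q) :
    (1 : Polynomial (ZMod 2)).degree < (X ^ p * (X + 1) ^ q : Polynomial (ZMod 2)).degree := by
  rw [degree_one, degShift]
  exact_mod_cast hpq

lemma monicM (p q : ℕ) (hpq : 1 ≤ p + q) :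
    (1 + X ^ p * (X + 1) ^ q : Polynomial (ZMod 2)).Monic := by
  rw [add_comm]
  exact (monicShift p q).add_of_left (degOneLt p q hpq)

lemma natDegM (p q : ℕ) (hpq : 1 ≤ p + q) :
    (1 + X ^ p * (X + 1) ^ q : Polynomial (ZMod 2)).natDegree = p + q := by
  rw [natDegree_add_eq_right_of_degree_lt (degOneLt p q hpq), natDegShift]

lemma sigmaPow_succ (P : Polynomial (ZMod 2)) (n : ℕ) :
    sigmaPow P (n + 1) = sigmaPow P n + P ^ (n + 1) := Finset.sum_range_succ _ _

lemma sigmaPow_deg (P : Polynomial (ZMod 2)) (hP : P.Monic) (hd : 1 ≤ P.natDegree) (n : ℕ) :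
    (sigmaPow P n).Monic ∧ (sigmaPow P n).natDegree = n * P.natDegree := by
  induction n with
  | zero => refine ⟨?_, ?_⟩ <;> simp [sigmaPow]
  | succ n ih =>
    have hlt : (sigmaPow P n).degree < (P ^ (n + 1)).degree := by
      calc (sigmaPow P n).degree ≤ ((n * P.natDegree : ℕ) : WithBot ℕ) := by
            rw [← ih.2]; exact degree_le_natDegree
        _ < (((n + 1) * P.natDegree : ℕ) : WithBot ℕ) := by
            exact_mod_cast (by nlinarith : n * P.natDegree < (n + 1) * P.natDegree)
        _ = (P ^ (n + 1)).degree := by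
            rw [degree_eq_natDegree (hP.pow (n + 1)).ne_zero, hP.natDegree_pow]
    rw [sigmaPow_succ]
    exact ⟨(hP.pow (n + 1)).add_of_right hlt,
      by rw [natDegree_add_eq_right_of_degree_lt hlt, hP.natDegree_pow]⟩

lemma coeffMpow (a b h l : ℕ) (hab5 : 5 ≤ a + b) (hh : 2 ≤ h) (hl : l ≤ a + b) :
    ((1 + X ^ a * (X + 1) ^ b : Polynomial (ZMod 2)) ^ (2 * h)).coeff (2 * h * (a + b) - l)
      = ((2 * h * b).choose l : ZMod 2) := by
  set T : Polynomial (ZMod 2) := X ^ a * (X + 1) ^ b with hT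
  rw [add_comm (1 : Polynomial (ZMod 2)) T, add_pow]
  simp only [one_pow, mul_one]
  rw [finset_sum_coeff]
  have hcoeff : ∀ k, (T ^ k * ((2 * h).choose k : Polynomial (ZMod 2))).coeff (2 * h * (a + b) - l)
      = (T ^ k).coeff (2 * h * (a + b) - l) * (((2 * h).choose k : ℕ) : ZMod 2) := by
    intro k; rw [← C_eq_natCast, coeff_mul_C]
  simp only [hcoeff]
  rw [Finset.sum_range_succ]
  have hzero : ∀ k ∈ Finset.range (2 * h),
      (T ^ k).coeff (2 * h * (a + b) - l) * (((2 * h).choose k : ℕ) : ZMod 2) = 0 := by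
    intro k hk
    rw [Finset.mem_range] at hk
    rcases eq_or_lt_of_le (Nat.lt_succ_iff.mp (by omega : k < (2 * h - 1) + 1)) with hk1 | hk2
    · have : (((2 * h).choose k : ℕ) : ZMod 2) = 0 := by
        subst hk1
        exact evenChoose (even_two_mul h) (Nat.odd_iff.mpr (by omega))
      rw [this, mul_zero]
    · have hdeg : (T ^ k).natDegree < 2 * h * (a + b) - l := by
        have h1 : (T ^ k).natDegree = k * (a + b) := by
          rw [(monicShift a b).natDegree_pow, natDegShift]
        have h2 : k * (a + b) ≤ (2 * h - 2) * (a + b) :=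
          Nat.mul_le_mul_right _ (by omega)
        have h3 : 2 * (a + b) ≤ 2 * h * (a + b) := Nat.mul_le_mul_right _ (by omega)
        have h4 : (2 * h - 2) * (a + b) = 2 * h * (a + b) - 2 * (a + b) := by
          rw [Nat.sub_mul]
        omega
      rw [coeff_eq_zero_of_natDegree_lt hdeg, zero_mul]
  rw [Finset.sum_eq_zero hzero, zero_add, Nat.choose_self, Nat.cast_one, mul_one]
  have hTpow : T ^ (2 * h) = X ^ (a * (2 * h)) * (X + 1) ^ (b * (2 * h)) := by
    rw [hT]; ring
  have hidx : 2 * h * (a + b) - l = a * (2 * h) + b * (2 * h) - l := by ring_nf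
  have hle : a + b ≤ 2 * h * (a + b) := Nat.le_mul_of_pos_left _ (by omega)
  have heq : a * (2 * h) + b * (2 * h) = 2 * h * (a + b) := by ring
  rw [hTpow, hidx, shiftCoeff _ _ _ (by omega), show b * (2 * h) = 2 * h * b by ring]

lemma coeffSigma (a b h l : ℕ) (hab5 : 5 ≤ a + b) (hh : 2 ≤ h) (hl : l ≤ a + b) :
    (sigmaPow (1 + X ^ a * (X + 1) ^ b) (2 * h)).coeff (2 * h * (a + b) - l)
      = ((2 * h * b).choose l : ZMod 2) + (if l = a + b then 1 else 0) := by
  have hM : (1 + X ^ a * (X + 1) ^ b : Polynomial (ZMod 2)).Monic := monicM a b (by omega)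
  have hMd : (1 + X ^ a * (X + 1) ^ b : Polynomial (ZMod 2)).natDegree = a + b :=
    natDegM a b (by omega)
  obtain ⟨n, hn⟩ : ∃ n, 2 * h = n + 1 := ⟨2 * h - 1, by omega⟩
  have hsig := sigmaPow_deg _ hM (by omega) n
  rw [hn, sigmaPow_succ, coeff_add, ← hn, coeffMpow a b h l hab5 hh hl]
  have hnd : (sigmaPow (1 + X ^ a * (X + 1) ^ b) n).natDegree = n * (a + b) := by
    rw [hsig.2, hMd]
  have hNl : n * (a + b) ≤ 2 * h * (a + b) - l := by
    have : (n + 1) * (a + b) = n * (a + b) + (a + b) := by ring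
    rw [hn] at *
    omega
  rcases eq_or_lt_of_le hl with heq | hlt
  · rw [if_pos heq]
    have : 2 * h * (a + b) - l = (sigmaPow (1 + X ^ a * (X + 1) ^ b) n).natDegree := by
      rw [hnd, hn]
      have : (n + 1) * (a + b) = n * (a + b) + (a + b) := by ring
      omega
    rw [this, hsig.1.coeff_natDegree, add_comm]
  · rw [if_neg (by omega), coeff_eq_zero_of_natDegree_lt (by
      rw [hnd]
      have h1 : (n + 1) * (a + b) = n * (a + b) + (a + b) := by ring
      have h2 : n * (a + b) + (a + b) = 2 * h * (a + b) := by rw [hn, ← h1]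
      omega), zero_add, add_zero]

theorem stmt_7
    (h a b : ℕ) (hh : 2 ≤ h) (hp : Nat.Prime (2 * h + 1))
    (ha : 1 ≤ a) (hb : 1 ≤ b) (hab5 : 5 ≤ a + b)
    (M : Polynomial (ZMod 2)) (hM : M = 1 + X ^ a * (X + 1) ^ b)
    (hMirr : Irreducible M)
    (J : Finset ℕ) (aj bj : ℕ → ℕ)
    (haj : ∀ j ∈ J, 1 ≤ aj j) (hbj : ∀ j ∈ J, 1 ≤ bj j)
    (hMjirr : ∀ j ∈ J, Irreducible (1 + X ^ aj j * (X + 1) ^ bj j : Polynomial (ZMod 2)))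
    (hdistinct : ∀ i ∈ J, ∀ j ∈ J, i ≠ j →
      (1 + X ^ aj i * (X + 1) ^ bj i : Polynomial (ZMod 2)) ≠
        1 + X ^ aj j * (X + 1) ^ bj j)
    (hfact : sigmaPow M (2 * h) = ∏ j ∈ J, (1 + X ^ aj j * (X + 1) ^ bj j))
    (u v : ℕ) (hu : u = ∑ j ∈ J, aj j) (hv : v = ∑ j ∈ J, bj j)
    (hueven : Even u) (hveven : Even v)
    (U W R : Polynomial (ZMod 2)) (c : ℕ)
    (hU : U = X ^ u * (X + 1) ^ v)
    (hW : W = U + sigmaPow M (2 * h) + 1)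
    (hc : c = 2 * h * (a + b) - W.natDegree)
    (hR : R = sigmaPow M (2 * h - 1) + W)
    (hW0 : W ≠ 0) :
    (c < a + b → Even c) ∧ (a + b < c → Even (a + b)) := by

  have hMd : M.natDegree = a + b := by rw [hM]; exact natDegM a b (by omega)
  have hMmon : M.Monic := by rw [hM]; exact monicM a b (by omega)
  have hsig := sigmaPow_deg M hMmon (by omega) (2 * h)
  have hsigdeg : (sigmaPow M (2 * h)).natDegree = 2 * h * (a + b) := by rw [hsig.2, hMd]
  have huv : u + v = 2 * h * (a + b) := by
    have h1 : (∏ j ∈ J, (1 + X ^ aj j * (X + 1) ^ bj j : Polynomial (ZMod 2))).natDegree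
        = ∑ j ∈ J, (aj j + bj j) := by
      rw [natDegree_prod_of_monic _ _
        (fun j hj => monicM (aj j) (bj j) (by have := haj j hj; have := hbj j hj; omega))]
      exact Finset.sum_congr rfl fun j hj =>
        natDegM _ _ (by have := haj j hj; have := hbj j hj; omega)
    rw [hu, hv, ← Finset.sum_add_distrib, ← h1, ← hfact, hsigdeg]
  have hle : a + b ≤ 2 * h * (a + b) := Nat.le_mul_of_pos_left _ (by omega)
  have hle2 : 2 * (a + b) ≤ 2 * h * (a + b) := Nat.mul_le_mul_right _ (by omega)
  have hWcoeff : ∀ l ≤ a + b, W.coeff (2 * h * (a + b) - l)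
      = (v.choose l : ZMod 2) + ((2 * h * b).choose l : ZMod 2)
        + (if l = a + b then 1 else 0) := by
    intro l hl
    rw [hW, coeff_add, coeff_add, coeff_one, if_neg (by omega), add_zero, hU,
      show 2 * h * (a + b) - l = u + v - l by omega, shiftCoeff u v l (by omega),
      show u + v - l = 2 * h * (a + b) - l by omega, hM, coeffSigma a b h l hab5 hh hl]
    ring
  have hWle : W.natDegree ≤ 2 * h * (a + b) := by
    rw [hW]
    refine natDegree_add_le_of_degree_le (natDegree_add_le_of_degree_le ?_ ?_) ?_
    · rw [hU, natDegShift]; omega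
    · rw [hsigdeg]
    · rw [natDegree_one]; omega
  have hcN : c ≤ 2 * h * (a + b) := by omega
  have hWdeg : W.natDegree = 2 * h * (a + b) - c := by omega
  constructor
  · intro h1
    by_contra hne
    have hodd : Odd c := Nat.not_even_iff_odd.mp hne
    have h0 : W.coeff (2 * h * (a + b) - c) ≠ 0 := by
      rw [← hWdeg]
      exact mt leadingCoeff_eq_zero.mp hW0
    apply h0
    rw [hWcoeff c (by omega), if_neg (by omega), evenChoose hveven hodd,
      evenChoose ⟨h * b, by ring⟩ hodd]
    simp
  · intro h2
    by_contra hne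
    have hodd : Odd (a + b) := Nat.not_even_iff_odd.mp hne
    have h0 : W.coeff (2 * h * (a + b) - (a + b)) = 0 :=
      coeff_eq_zero_of_natDegree_lt (by omega)
    rw [hWcoeff (a + b) le_rfl, if_pos rfl, evenChoose hveven hodd,
      evenChoose ⟨h * b, by ring⟩ hodd] at h0
    simp at h0
end

section
/- Let M = 1 + x^a(x+1)^b be a Mersenne prime and let h >= 1 be an integer. (i) If a+b is odd, then alpha_{a+b}(M^(2h) + M^(2h-1)) = 1. (ii) If a+b is even, then alpha_{a+b+1}(M^(2h) + M^(2h-1)) = 1. (iii) If a+b is even, then alpha_1(sigma(M^(2h-1))) = 1. -/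
open Polynomial

lemma natCast_odd_zmod2 {n : ℕ} (h : Odd n) : (n : ZMod 2) = 1 := by
  obtain ⟨k, rfl⟩ := h
  push_cast
  rw [show ((2 : ZMod 2)) = 0 by decide]
  ring

lemma sq_coeff_odd (f : Polynomial (ZMod 2)) {n : ℕ} (hn : Odd n) : (f ^ 2).coeff n = 0 := by
  have h2 : ¬ (2 ∣ n) := by
    intro hd
    exact (Nat.not_even_iff_odd.mpr hn) (even_iff_two_dvd.mpr hd)
  rw [← map_frobenius_expand (p := 2) f, coeff_map, coeff_expand (by norm_num) f n, if_neg h2, map_zero]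

lemma xone_monic : ((X : Polynomial (ZMod 2)) + 1).Monic := by
  simpa using monic_X_add_C (1 : ZMod 2)

lemma mers_prod_monic (a b : ℕ) : ((X : Polynomial (ZMod 2)) ^ a * (X + 1) ^ b).Monic :=
  (monic_X_pow a).mul (xone_monic.pow b)

lemma mers_prod_natDegree (a b : ℕ) :
    ((X : Polynomial (ZMod 2)) ^ a * (X + 1) ^ b).natDegree = a + b := by
  have h1 : ((X : Polynomial (ZMod 2)) + 1).natDegree = 1 := by
    simpa using natDegree_X_add_C (1 : ZMod 2)
  rw [(monic_X_pow a).natDegree_mul (xone_monic.pow b), natDegree_X_pow,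
    xone_monic.natDegree_pow, h1, mul_one]

lemma mers_monic (a b : ℕ) (hab : 0 < a + b) :
    (1 + (X : Polynomial (ZMod 2)) ^ a * (X + 1) ^ b).Monic := by
  refine (mers_prod_monic a b).add_of_right ?_
  rw [degree_one, degree_eq_natDegree (mers_prod_monic a b).ne_zero, mers_prod_natDegree]
  exact_mod_cast hab

lemma mers_natDegree (a b : ℕ) (hab : 0 < a + b) :
    (1 + (X : Polynomial (ZMod 2)) ^ a * (X + 1) ^ b).natDegree = a + b := by
  have hlt : (1 : Polynomial (ZMod 2)).natDegree <
      ((X : Polynomial (ZMod 2)) ^ a * (X + 1) ^ b).natDegree := by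
    rw [natDegree_one, mers_prod_natDegree]; exact hab
  rw [natDegree_add_eq_right_of_natDegree_lt hlt, mers_prod_natDegree]

theorem stmt_13
    (a b h : ℕ) (ha : 1 ≤ a) (hb : 1 ≤ b) (hh : 1 ≤ h)
    (M : Polynomial (ZMod 2)) (hM : M = 1 + X ^ a * (X + 1) ^ b)
    (hMirr : Irreducible M) :
    (Odd (a + b) → alpha (a + b) (M ^ (2 * h) + M ^ (2 * h - 1)) = 1) ∧
    (Even (a + b) → alpha (a + b + 1) (M ^ (2 * h) + M ^ (2 * h - 1)) = 1) ∧
    (Even (a + b) → alpha 1 (sigmaPow M (2 * h - 1)) = 1) := by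
  have hab : 0 < a + b := by omega
  set d := a + b with hd
  have hMM : M.Monic := by rw [hM]; exact mers_monic a b hab
  have hMdeg : M.natDegree = d := by rw [hM]; exact mers_natDegree a b hab
  -- second coefficient of M
  have hMb : M.coeff (d - 1) = (b : ZMod 2) := by
    rw [hM, coeff_add, coeff_one, if_neg (by omega),
      show d - 1 = (b - 1) + a by omega, coeff_X_pow_mul, coeff_X_add_one_pow,
      show b - 1 = b - 1 from rfl, Nat.choose_symm hb, Nat.choose_one_right, zero_add]
  have hMnext : M.nextCoeff = (b : ZMod 2) := by
    rw [nextCoeff_of_natDegree_pos (by omega : 0 < M.natDegree), hMdeg]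
    exact hMb
  -- coefficient of M^n just below the top
  have hpow : ∀ n : ℕ, 1 ≤ n → (M ^ n).coeff (n * d - 1) = (n : ZMod 2) * b := by
    intro n hn
    have h1 := hMM.nextCoeff_pow n
    rw [nextCoeff_of_natDegree_pos (by rw [hMM.natDegree_pow, hMdeg]; positivity),
      hMM.natDegree_pow, hMdeg] at h1
    rw [h1, hMnext, nsmul_eq_mul]
  -- M^(2h) has no odd-degree terms
  have hsq : ∀ k : ℕ, Odd k → (M ^ (2 * h)).coeff k = 0 := by
    intro k hk
    rw [mul_comm 2 h, pow_mul]
    exact sq_coeff_odd _ hk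
  -- degree of S
  have hpowlt : (M ^ (2 * h - 1)).natDegree < (M ^ (2 * h)).natDegree := by
    rw [hMM.natDegree_pow, hMM.natDegree_pow, hMdeg]
    have : 2 * h - 1 < 2 * h := by omega
    exact (Nat.mul_lt_mul_right hab).mpr this
  have hSdeg : (M ^ (2 * h) + M ^ (2 * h - 1)).natDegree = 2 * h * d := by
    rw [natDegree_add_eq_left_of_natDegree_lt hpowlt, hMM.natDegree_pow, hMdeg]
  -- odd b when d is even
  have hbodd : Even d → Odd b := by
    intro hev
    by_contra hbe
    rw [Nat.not_odd_iff_even] at hbe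
    have hae : Even a := by
      rcases Nat.even_add.mp hev with h'
      exact h'.mpr hbe
    rw [Nat.even_iff] at hae hbe
    obtain ⟨a', rfl⟩ : ∃ a', a = 2 * a' := ⟨a / 2, by omega⟩
    obtain ⟨b', rfl⟩ : ∃ b', b = 2 * b' := ⟨b / 2, by omega⟩
    set N : Polynomial (ZMod 2) := 1 + X ^ a' * (X + 1) ^ b' with hN
    have hMsq : M = N * N := by
      rw [hM, hN, ← sq, add_pow_char (1 : Polynomial (ZMod 2)) (X ^ a' * (X + 1) ^ b') 2,
        one_pow, mul_pow, ← pow_mul, ← pow_mul, mul_comm a' 2, mul_comm b' 2]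
    have hNdeg : N.natDegree = a' + b' := mers_natDegree a' b' (by omega)
    rcases hMirr.isUnit_or_isUnit hMsq with hu | hu <;>
    · have := natDegree_eq_zero_of_isUnit hu
      omega
  have hoddcast : ∀ n : ℕ, Odd n → (n : ZMod 2) = 1 := fun n hn => natCast_odd_zmod2 hn
  have h2h1odd : Odd (2 * h - 1) := ⟨h - 1, by omega⟩
  refine ⟨?_, ?_, ?_⟩
  · -- part (i)
    intro hdo
    have hidx : 2 * h * d - d = (2 * h - 1) * d := by
      rw [Nat.sub_mul, one_mul]
    rw [alpha, hSdeg, hidx, coeff_add]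
    have h1 : (M ^ (2 * h)).coeff ((2 * h - 1) * d) = 0 :=
      hsq _ (h2h1odd.mul hdo)
    have h2 : (M ^ (2 * h - 1)).coeff ((2 * h - 1) * d) = 1 := by
      have := (hMM.pow (2 * h - 1)).coeff_natDegree
      rwa [hMM.natDegree_pow, hMdeg] at this
    rw [h1, h2, zero_add]
  · -- part (ii)
    intro hde
    have hbodd' := hbodd hde
    have hd2 : 2 ≤ d := by omega
    have hidx : 2 * h * d - (d + 1) = (2 * h - 1) * d - 1 := by
      have : (2 * h - 1) * d + d = 2 * h * d := by
        rw [← Nat.succ_mul]; congr 1; omega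
      omega
    rw [alpha, hSdeg, hidx, coeff_add]
    have hodd : Odd ((2 * h - 1) * d - 1) := by
      refine Nat.Even.sub_odd ?_ (hde.mul_left _) odd_one
      have : 1 * d ≤ (2 * h - 1) * d := Nat.mul_le_mul_right d (by omega)
      omega
    have h1 : (M ^ (2 * h)).coeff ((2 * h - 1) * d - 1) = 0 := hsq _ hodd
    have h2 : (M ^ (2 * h - 1)).coeff ((2 * h - 1) * d - 1) = 1 := by
      rw [hpow _ (by omega), hoddcast _ h2h1odd, hoddcast _ hbodd', one_mul]
    rw [h1, h2, zero_add]
  · -- part (iii)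
    intro hde
    have hbodd' := hbodd hde
    have hd2 : 2 ≤ d := by omega
    set n := 2 * h - 1 with hn
    have hn1 : 1 ≤ n := by omega
    have hsplit : sigmaPow M n = (∑ i ∈ Finset.range n, M ^ i) + M ^ n := by
      rw [sigmaPow, Finset.sum_range_succ]
    have hRle : (∑ i ∈ Finset.range n, M ^ i).natDegree ≤ (n - 1) * d := by
      refine natDegree_sum_le_of_forall_le _ _ fun i hi => ?_
      rw [hMM.natDegree_pow, hMdeg]
      have := Finset.mem_range.mp hi
      exact Nat.mul_le_mul_right d (by omega)
    have hkey : (n - 1) * d + d = n * d := by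
      rw [← Nat.succ_mul]; congr 1; omega
    have hRlt : (∑ i ∈ Finset.range n, M ^ i).natDegree < (M ^ n).natDegree := by
      rw [hMM.natDegree_pow, hMdeg]
      omega
    have hσdeg : (sigmaPow M n).natDegree = n * d := by
      rw [hsplit, natDegree_add_eq_right_of_natDegree_lt hRlt, hMM.natDegree_pow, hMdeg]
    rw [alpha, hσdeg, hsplit, coeff_add]
    have hR0 : (∑ i ∈ Finset.range n, M ^ i).coeff (n * d - 1) = 0 := by
      apply coeff_eq_zero_of_natDegree_lt
      omega
    have h2 : (M ^ n).coeff (n * d - 1) = 1 := by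
      rw [hpow _ hn1, hoddcast _ h2h1odd, hoddcast _ hbodd', one_mul]
    rw [hR0, h2, zero_add]
end
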